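/- arXiv:0909.0077 — 2 statements merged into one kernel-verified Lean document; each statement's English description precedes it below -/
import Mathlib

section
/- The normalizer of the subgroup U(H_s) ⊗ 1_e inside the unitary group U(H_s ⊗ H_e) equals U(H_s) ⊗ U(H_e) = {Ψ ⊗ Φ : Ψ unitary on H_s, Φ unitary on H_e}. -/
open Matrix Kronecker
open scoped ComplexOrder

/-- Hilbert–Schmidt (Frobenius) norm of a complex square matrix. -/
noncomputable def hsNorm {k : Type*} [Fintype k] (M : Matrix k k ℂ) : ℝ :=
  Real.sqrt (Matrix.trace (Mᴴ * M)).re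

/-- Trace norm: trace of the positive-semidefinite square root of `Mᴴ * M`. -/
noncomputable def traceNorm {k : Type*} [Fintype k] [DecidableEq k] (M : Matrix k k ℂ) : ℝ :=
  (Matrix.trace
    ((Matrix.posSemidef_conjTranspose_mul_self M).1.eigenvectorUnitary.1 *
      Matrix.diagonal (((↑) : ℝ → ℂ) ∘ (√·) ∘ (Matrix.posSemidef_conjTranspose_mul_self M).1.eigenvalues) *
      (star (Matrix.posSemidef_conjTranspose_mul_self M).1.eigenvectorUnitary : Matrix k k ℂ))).re

/-- Induced two-norm: the largest singular value of `M`. -/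
noncomputable def twoNorm {k : Type*} [Fintype k] [DecidableEq k] (M : Matrix k k ℂ) : ℝ :=
  ⨆ i, Real.sqrt
    ((Matrix.PosSemidef.isHermitian
      (Matrix.posSemidef_conjTranspose_mul_self M)).eigenvalues i)

/-- Partial trace over the environment factor `e`. -/
noncomputable def ptraceE {s e : Type*} [Fintype s] [Fintype e]
    (M : Matrix (s × e) (s × e) ℂ) : Matrix s s ℂ :=
  Matrix.of fun i j => ∑ ν : e, M (i, ν) (j, ν)

/-- Partial trace over the system factor `s`. -/
noncomputable def ptraceS {s e : Type*} [Fintype s] [Fintype e]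
    (M : Matrix (s × e) (s × e) ℂ) : Matrix e e ℂ :=
  Matrix.of fun μ ν => ∑ i : s, M (i, μ) (i, ν)

/-- A density matrix: positive semidefinite with unit trace. -/
def IsDensity {k : Type*} [Fintype k] (ρ : Matrix k k ℂ) : Prop :=
  ρ.PosSemidef ∧ Matrix.trace ρ = 1

open Matrix Kronecker

lemma kronCT {s e : Type*} [Fintype s] [Fintype e] (A : Matrix s s ℂ) (B : Matrix e e ℂ) :
    (A ⊗ₖ B)ᴴ = Aᴴ ⊗ₖ Bᴴ := by
  ext ⟨i, μ⟩ ⟨j, ν⟩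
  simp [Matrix.conjTranspose_apply, Matrix.kronecker_apply, mul_comm]

lemma starMem {n : Type*} [Fintype n] [DecidableEq n] {M : Matrix n n ℂ}
    (h : M ∈ Matrix.unitaryGroup n ℂ) : Mᴴ ∈ Matrix.unitaryGroup n ℂ := by
  rw [← Matrix.star_eq_conjTranspose]
  exact Unitary.star_mem h

lemma kronOneInj {s e : Type*} [Fintype s] [Fintype e] [DecidableEq e] [Nonempty e]
    {B B' : Matrix s s ℂ} (h : B ⊗ₖ (1 : Matrix e e ℂ) = B' ⊗ₖ 1) : B = B' := by
  ext i j
  have := congrFun (congrFun h (i, Classical.arbitrary e)) (j, Classical.arbitrary e)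
  simpa [Matrix.kronecker_apply] using this

lemma oneKronInj {s e : Type*} [Fintype s] [Fintype e] [DecidableEq s] [Nonempty s]
    {B B' : Matrix e e ℂ} (h : (1 : Matrix s s ℂ) ⊗ₖ B = 1 ⊗ₖ B') : B = B' := by
  ext μ ν
  have := congrFun (congrFun h (Classical.arbitrary s, μ)) (Classical.arbitrary s, ν)
  simpa [Matrix.kronecker_apply] using this
open Matrix Kronecker

lemma herm_mem_span {n : Type*} [Fintype n] [DecidableEq n]
    {H : Matrix n n ℂ} (hH : H.IsHermitian) :
    H ∈ Submodule.span ℂ ((Matrix.unitaryGroup n ℂ : Set (Matrix n n ℂ))) := by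
  set V : Matrix n n ℂ := (hH.eigenvectorUnitary : Matrix n n ℂ) with hV
  have hVmem : V ∈ Matrix.unitaryGroup n ℂ := hH.eigenvectorUnitary.2
  have hVV : V * star V = 1 := Matrix.mem_unitaryGroup_iff.mp hVmem
  set Sg : n → Matrix n n ℂ := fun i => Matrix.diagonal (fun j => if j = i then (-1 : ℂ) else 1)
    with hSg
  have hSgU : ∀ i, Sg i ∈ Matrix.unitaryGroup n ℂ := by
    intro i
    have hstar : star (Sg i) = Sg i := by
      rw [hSg, Matrix.star_eq_conjTranspose, Matrix.diagonal_conjTranspose]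
      refine congrArg Matrix.diagonal (funext fun j => ?_)
      by_cases h : j = i <;> simp [h]
    rw [Matrix.mem_unitaryGroup_iff, hstar]
    simp only [hSg, Matrix.diagonal_mul_diagonal]
    refine (congrArg Matrix.diagonal (funext fun j => ?_)).trans Matrix.diagonal_one
    by_cases h : j = i <;> simp [h]
  have key : H = ∑ i, ((hH.eigenvalues i / 2 : ℝ) : ℂ) • (1 - V * Sg i * star V) := by
    have hd : Matrix.diagonal (RCLike.ofReal ∘ hH.eigenvalues : n → ℂ)
        = ∑ i, ((hH.eigenvalues i / 2 : ℝ) : ℂ) • ((1 : Matrix n n ℂ) - Sg i) := by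
      ext a b
      rw [Matrix.sum_apply]
      by_cases h : a = b
      · subst h
        simp only [Matrix.diagonal_apply_eq, Matrix.smul_apply,
          Matrix.sub_apply, Matrix.one_apply_eq, hSg]
        rw [Finset.sum_eq_single a]
        · simp only [Matrix.diagonal_apply_eq, if_pos rfl, smul_eq_mul, Function.comp_apply]
          push_cast
          ring_nf
          rfl
        · intro b _ hb
          simp only [Matrix.diagonal_apply_eq, smul_eq_mul]
          rw [if_neg (fun hc => hb hc.symm)]
          ring
        · intro h; exact absurd (Finset.mem_univ a) h
      · rw [Matrix.diagonal_apply_ne _ h]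
        symm
        refine Finset.sum_eq_zero fun i _ => ?_
        simp only [Matrix.smul_apply, Matrix.sub_apply, Matrix.one_apply_ne h, hSg,
          Matrix.diagonal_apply_ne _ h]
        simp
    calc H = V * Matrix.diagonal (RCLike.ofReal ∘ hH.eigenvalues) * star V :=
          hH.spectral_theorem
    _ = ∑ i, ((hH.eigenvalues i / 2 : ℝ) : ℂ) • (V * (1 - Sg i) * star V) := by
        rw [hd, Finset.mul_sum, Finset.sum_mul]
        congr 1; ext i
        rw [Matrix.mul_smul, Matrix.smul_mul]
    _ = ∑ i, ((hH.eigenvalues i / 2 : ℝ) : ℂ) • (1 - V * Sg i * star V) := by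
        congr 1; ext i
        congr 1
        rw [Matrix.mul_sub, Matrix.sub_mul, mul_one, hVV]
  rw [key]
  refine Submodule.sum_mem _ fun i _ => Submodule.smul_mem _ _ (Submodule.sub_mem _ ?_ ?_)
  · exact Submodule.subset_span (Submonoid.one_mem _)
  · exact Submodule.subset_span (mul_mem (mul_mem hVmem (hSgU i)) (Unitary.star_mem hVmem))

lemma mem_span_unitary {n : Type*} [Fintype n] [DecidableEq n] (A : Matrix n n ℂ) :
    A ∈ Submodule.span ℂ ((Matrix.unitaryGroup n ℂ : Set (Matrix n n ℂ))) := by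
  have h1 : (A + Aᴴ).IsHermitian := by
    unfold Matrix.IsHermitian
    rw [Matrix.conjTranspose_add, Matrix.conjTranspose_conjTranspose, add_comm]
  have hs : star (-Complex.I / 2) = Complex.I / 2 := by
    rw [star_div₀, star_neg, Complex.star_def, Complex.conj_I,
      show (starRingEnd ℂ) 2 = 2 from Complex.conj_ofNat 2]
    ring
  have h2 : ((-(Complex.I) / 2) • (A - Aᴴ)).IsHermitian := by
    unfold Matrix.IsHermitian
    rw [Matrix.conjTranspose_smul, Matrix.conjTranspose_sub,
      Matrix.conjTranspose_conjTranspose, hs,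
      show Aᴴ - A = -(A - Aᴴ) from (neg_sub _ _).symm, smul_neg, ← neg_smul, neg_div]
  have hA : A = ((1:ℂ)/2) • (A + Aᴴ) + Complex.I • ((-(Complex.I) / 2) • (A - Aᴴ)) := by
    rw [smul_smul,
      show Complex.I * (-Complex.I/2) = (1:ℂ)/2 by
        rw [mul_comm, div_mul_eq_mul_div, neg_mul, Complex.I_mul_I, neg_neg],
      ← smul_add,
      show (A + Aᴴ) + (A - Aᴴ) = (2:ℂ) • A by rw [two_smul]; abel,
      smul_smul]
    norm_num
  rw [hA]
  exact Submodule.add_mem _ (Submodule.smul_mem _ _ (herm_mem_span h1))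
    (Submodule.smul_mem _ _ (herm_mem_span h2))
open Matrix

lemma stdCT {n : Type*} [Fintype n] [DecidableEq n] (i j : n) :
    (Matrix.single i j (1:ℂ))ᴴ = Matrix.single j i (1:ℂ) := by
  ext a b
  simp only [Matrix.conjTranspose_apply, Matrix.single, Matrix.of_apply]
  by_cases h1 : j = a <;> by_cases h2 : i = b <;> simp [h1, h2, and_comm]

lemma inner_of_hom {n : Type*} [Fintype n] [DecidableEq n] [Nonempty n]
    (g : Matrix n n ℂ → Matrix n n ℂ)
    (hadd : ∀ A B, g (A + B) = g A + g B)
    (hsmul : ∀ (c : ℂ) A, g (c • A) = c • g A)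
    (hmul : ∀ A B, g (A * B) = g A * g B)
    (hone : g 1 = 1)
    (hstar : ∀ A, g Aᴴ = (g A)ᴴ) :
    ∃ Ψ ∈ Matrix.unitaryGroup n ℂ, ∀ A, g A = Ψ * A * Ψᴴ := by
  classical
  set G : Matrix n n ℂ →ₗ[ℂ] Matrix n n ℂ :=
    { toFun := g, map_add' := hadd, map_smul' := hsmul } with hG
  have hGg : ∀ A, G A = g A := fun _ => rfl
  set E : n → n → Matrix n n ℂ := fun i j => Matrix.single i j (1:ℂ) with hE
  obtain ⟨i0⟩ := (inferInstance : Nonempty n)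
  set P : Matrix n n ℂ := g (E i0 i0) with hP
  have hPP : P * P = P := by
    rw [hP, ← hmul, hE]; simp
  have hPne : P ≠ 0 := by
    intro h0
    have hdiag : ∀ i, g (E i i) = 0 := by
      intro i
      have : E i i = E i i0 * E i0 i0 * E i0 i := by rw [hE]; simp
      rw [this, hmul, hmul, ← hP, h0, mul_zero, zero_mul]
    have hsum : (1 : Matrix n n ℂ) = ∑ i, g (E i i) := by
      have h1 : (1 : Matrix n n ℂ) = ∑ i, E i i := by
        ext a b
        rw [Matrix.sum_apply]
        by_cases h : a = b
        · subst h
          rw [Finset.sum_eq_single a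
            (fun b _ hb => Matrix.single_apply_of_ne b b 1 a a (fun hc => hb hc.1))
            (fun h => absurd (Finset.mem_univ a) h)]
          simp [hE]
        · rw [Matrix.one_apply_ne h]
          symm
          exact Finset.sum_eq_zero fun i _ =>
            Matrix.single_apply_of_ne i i 1 a b (fun hc => h (hc.1.symm.trans hc.2))
      calc (1 : Matrix n n ℂ) = g 1 := hone.symm
      _ = G (∑ i, E i i) := by rw [hGg, ← h1]
      _ = ∑ i, g (E i i) := by rw [map_sum]; rfl
    rw [Finset.sum_congr rfl (fun i _ => hdiag i), Finset.sum_const, smul_zero] at hsum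
    have h10 : (1:ℂ) = 0 := by simpa using Matrix.ext_iff.mpr hsum i0 i0
    exact one_ne_zero h10
  -- find fixed vector
  obtain ⟨a0, b0, hab⟩ : ∃ a b, P a b ≠ 0 := by
    by_contra h
    push_neg at h
    exact hPne (Matrix.ext fun a b => h a b)
  set v0 : n → ℂ := P *ᵥ Pi.single b0 1 with hv0
  have hv0ne : v0 ≠ 0 := by
    intro h
    have := congrFun h a0
    rw [hv0, Matrix.mulVec_single_one] at this
    simp only [mul_one, Pi.zero_apply] at this
    exact hab this
  have hPv0 : P *ᵥ v0 = v0 := by rw [hv0, Matrix.mulVec_mulVec, hPP]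
  -- normalize
  set r : ℝ := Real.sqrt (∑ a, Complex.normSq (v0 a)) with hr
  have hrpos : 0 < r := by
    apply Real.sqrt_pos.mpr
    have : ∃ a, v0 a ≠ 0 := by
      by_contra h; push_neg at h; exact hv0ne (funext fun a => h a)
    obtain ⟨a, ha⟩ := this
    exact Finset.sum_pos' (fun i _ => Complex.normSq_nonneg _)
      ⟨a, Finset.mem_univ a, Complex.normSq_pos.mpr ha⟩
  set v : n → ℂ := ((r : ℂ)⁻¹) • v0 with hv
  have hPv : P *ᵥ v = v := by rw [hv, Matrix.mulVec_smul, hPv0]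
  have hnorm : ∑ a, star (v a) * v a = 1 := by
    have : ∀ a, star (v a) * v a = ((r^2 : ℝ)⁻¹ : ℂ) * Complex.normSq (v0 a) := by
      intro a
      rw [hv]
      simp only [Pi.smul_apply, smul_eq_mul, star_mul', star_inv₀, Complex.star_def,
        Complex.conj_ofReal]
      rw [Complex.normSq_eq_conj_mul_self]
      push_cast
      ring
    rw [Finset.sum_congr rfl (fun a _ => this a), ← Finset.mul_sum]
    rw [show ∑ a, (Complex.normSq (v0 a) : ℂ) = ((∑ a, Complex.normSq (v0 a) : ℝ) : ℂ) by
      push_cast; ring]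
    rw [show ((∑ a, Complex.normSq (v0 a) : ℝ) : ℂ) = ((r^2 : ℝ) : ℂ) by
      rw [hr, Real.sq_sqrt]
      exact Finset.sum_nonneg fun i _ => Complex.normSq_nonneg _]
    rw [← Complex.ofReal_inv, ← Complex.ofReal_mul, inv_mul_cancel₀ (by positivity)]
    simp
  -- build Psi
  set Ψ : Matrix n n ℂ := Matrix.of (fun a i => (g (E i i0) *ᵥ v) a) with hΨ
  have hcol : ∀ i, (fun a => Ψ a i) = g (E i i0) *ᵥ v := fun i => rfl
  have hΨi0 : ∀ a, Ψ a i0 = v a := by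
    intro a
    rw [hΨ]
    show (g (E i0 i0) *ᵥ v) a = v a
    rw [← hP, hPv]
  have hcomm0 : ∀ i j, Ψ * E i j = g (E i j) * Ψ := by
    intro i j
    ext a b
    have hL : (Ψ * E i j) a b = if b = j then Ψ a i else 0 := by
      by_cases h : b = j
      · subst h; rw [if_pos rfl, hE]; simp
      · rw [if_neg h, hE]
        exact Matrix.mul_single_apply_of_ne 1 i j a b h Ψ
    have hR : (g (E i j) * Ψ) a b = ((g (E i j) * g (E b i0)) *ᵥ v) a := by
      rw [← Matrix.mulVec_mulVec, Matrix.mul_apply]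
      rfl
    rw [hL, hR, ← hmul]
    by_cases h : b = j
    · subst h
      rw [show E i b * E b i0 = E i i0 by rw [hE]; simp]
      rw [if_pos rfl, hΨ]
      rfl
    · rw [if_neg h]
      rw [show E i j * E b i0 = 0 by
        rw [hE]; exact Matrix.single_mul_single_of_ne 1 i j b (fun hc => h hc.symm) 1]
      rw [show g 0 = 0 by rw [show (0 : Matrix n n ℂ) = (0:ℂ) • 0 by simp, hsmul]; simp]
      simp
  have hcomm : ∀ A, Ψ * A = g A * Ψ := by
    intro A
    conv_lhs => rw [Matrix.matrix_eq_sum_single A]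
    conv_rhs => rw [Matrix.matrix_eq_sum_single A]
    rw [Finset.mul_sum, ← hGg, map_sum, Finset.sum_mul]
    refine Finset.sum_congr rfl fun i _ => ?_
    rw [Finset.mul_sum, map_sum, Finset.sum_mul]
    refine Finset.sum_congr rfl fun j _ => ?_
    rw [show Matrix.single i j (A i j) = (A i j) • E i j by
      rw [hE, Matrix.smul_single, smul_eq_mul, mul_one]]
    rw [_root_.map_smul, hGg, Matrix.mul_smul, Matrix.smul_mul, hcomm0]
  have hcommH : ∀ A, A * Ψᴴ = Ψᴴ * g A := by
    intro A
    have := hcomm Aᴴ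
    rw [hstar] at this
    have := congrArg Matrix.conjTranspose this
    rwa [Matrix.conjTranspose_mul, Matrix.conjTranspose_mul,
      Matrix.conjTranspose_conjTranspose, Matrix.conjTranspose_conjTranspose] at this
  have hC : ∀ A, A * (Ψᴴ * Ψ) = (Ψᴴ * Ψ) * A := by
    intro A
    calc A * (Ψᴴ * Ψ) = (A * Ψᴴ) * Ψ := by rw [mul_assoc]
    _ = Ψᴴ * (g A * Ψ) := by rw [hcommH, mul_assoc]
    _ = Ψᴴ * (Ψ * A) := by rw [hcomm]
    _ = (Ψᴴ * Ψ) * A := by rw [mul_assoc]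
  obtain ⟨c, hc⟩ : Ψᴴ * Ψ ∈ Set.range (Matrix.scalar n) :=
    Matrix.mem_range_scalar_iff_commute_single'.mpr fun i j =>
      hC (Matrix.single i j 1)
  have hdiagc : Ψᴴ * Ψ = Matrix.diagonal fun _ => c := by
    rw [← hc]; rfl
  have hcval : c = 1 := by
    have h1 : (Ψᴴ * Ψ) i0 i0 = c := by rw [hdiagc]; simp
    have h2 : (Ψᴴ * Ψ) i0 i0 = ∑ a, star (v a) * v a := by
      rw [Matrix.mul_apply]
      refine Finset.sum_congr rfl fun a _ => ?_
      rw [Matrix.conjTranspose_apply, hΨi0 a]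
    rw [h2, hnorm] at h1
    exact h1.symm
  have hunit : Ψᴴ * Ψ = 1 := by
    rw [hdiagc, hcval]; exact Matrix.diagonal_one
  have hΨmem : Ψ ∈ Matrix.unitaryGroup n ℂ := by
    rw [Matrix.mem_unitaryGroup_iff', Matrix.star_eq_conjTranspose]
    exact hunit
  refine ⟨Ψ, hΨmem, fun A => ?_⟩
  have hΨΨ : Ψ * Ψᴴ = 1 := mul_eq_one_comm.mpr hunit
  calc g A = g A * 1 := (mul_one _).symm
  _ = g A * (Ψ * Ψᴴ) := by rw [hΨΨ]
  _ = (g A * Ψ) * Ψᴴ := by rw [mul_assoc]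
  _ = (Ψ * A) * Ψᴴ := by rw [hcomm]
  _ = Ψ * A * Ψᴴ := rfl
open Matrix Kronecker

lemma commutant_lemma {s e : Type*} [Fintype s] [Fintype e] [DecidableEq s] [DecidableEq e]
    [Nonempty s] (V : Matrix (s × e) (s × e) ℂ)
    (h : ∀ A : Matrix s s ℂ, V * (A ⊗ₖ (1 : Matrix e e ℂ)) = (A ⊗ₖ 1) * V) :
    ∃ Φ : Matrix e e ℂ, V = (1 : Matrix s s ℂ) ⊗ₖ Φ := by
  obtain ⟨i0⟩ := (inferInstance : Nonempty s)
  refine ⟨Matrix.of fun μ ν => V (i0, μ) (i0, ν), ?_⟩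
  ext ⟨i, μ⟩ ⟨j, ν⟩
  set X : Matrix (s × e) (s × e) ℂ := Matrix.single j i0 1 ⊗ₖ (1 : Matrix e e ℂ)
    with hX
  have h2 : V * X = X * V := h (Matrix.single j i0 1)
  have hL : (V * X) (i, μ) (i0, ν) = V (i, μ) (j, ν) := by
    rw [Matrix.mul_apply]
    rw [Fintype.sum_prod_type]
    rw [Finset.sum_eq_single j]
    · rw [Finset.sum_eq_single ν]
      · simp [hX, Matrix.kronecker_apply]
      · intro β _ hβ
        simp only [hX, Matrix.kronecker_apply]
        rw [Matrix.one_apply_ne hβ]; simp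
      · intro hν; exact absurd (Finset.mem_univ ν) hν
    · intro a _ ha
      refine Finset.sum_eq_zero fun β _ => ?_
      simp [hX, Matrix.kronecker_apply,
        Matrix.single_apply_of_ne j i0 (1:ℂ) a i0 (fun hc => ha hc.1.symm)]
    · intro hj; exact absurd (Finset.mem_univ j) hj
  have hR : (X * V) (i, μ) (i0, ν) = (if i = j then V (i0, μ) (i0, ν) else 0) := by
    rw [Matrix.mul_apply, Fintype.sum_prod_type]
    by_cases hij : i = j
    · subst hij
      rw [Finset.sum_eq_single i0]
      · rw [Finset.sum_eq_single μ]
        · simp [hX, Matrix.kronecker_apply]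
        · intro β _ hβ
          simp only [hX, Matrix.kronecker_apply]
          rw [Matrix.one_apply_ne (Ne.symm hβ)]; simp
        · intro hμ; exact absurd (Finset.mem_univ μ) hμ
      · intro a _ ha
        refine Finset.sum_eq_zero fun β _ => ?_
        simp [hX, Matrix.kronecker_apply,
          Matrix.single_apply_of_ne i i0 (1:ℂ) i a (fun hc => ha hc.2.symm)]
      · intro hi0; exact absurd (Finset.mem_univ i0) hi0
    · rw [if_neg hij]
      refine Finset.sum_eq_zero fun a _ => Finset.sum_eq_zero fun β _ => ?_
      simp [hX, Matrix.kronecker_apply,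
        Matrix.single_apply_of_ne j i0 (1:ℂ) i a (fun hc => hij hc.1.symm)]
  have := congrFun (congrFun h2 (i, μ)) (i0, ν)
  rw [hL, hR] at this
  rw [this]
  by_cases hij : i = j
  · subst hij; simp [Matrix.kronecker_apply]
  · simp [Matrix.kronecker_apply, Matrix.one_apply_ne hij, hij]

/-- the normalizer of `U(H_s) ⊗ 1_e` in `U(H_s ⊗ H_e)` is `U(H_s) ⊗ U(H_e)`. -/
theorem stmt2 {s e : Type*} [Fintype s] [Fintype e] [DecidableEq s] [DecidableEq e]
    [Nonempty s] [Nonempty e] :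
    {U : Matrix (s × e) (s × e) ℂ | U ∈ Matrix.unitaryGroup (s × e) ℂ ∧
        (fun A => U * A * Uᴴ) ''
            {A : Matrix (s × e) (s × e) ℂ |
              ∃ W ∈ Matrix.unitaryGroup s ℂ, A = W ⊗ₖ (1 : Matrix e e ℂ)} =
          {A : Matrix (s × e) (s × e) ℂ |
            ∃ W ∈ Matrix.unitaryGroup s ℂ, A = W ⊗ₖ (1 : Matrix e e ℂ)}} =
      {U : Matrix (s × e) (s × e) ℂ | ∃ Ψ ∈ Matrix.unitaryGroup s ℂ,
        ∃ Φ ∈ Matrix.unitaryGroup e ℂ, U = Ψ ⊗ₖ Φ} := by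
  classical
  ext U
  simp only [Set.mem_setOf_eq]
  constructor
  · rintro ⟨hU, himg⟩
    obtain ⟨hU1, hU2⟩ := Unitary.mem_iff.mp hU
    rw [Matrix.star_eq_conjTranspose] at hU1 hU2
    -- the submodule of matrices A with U (A⊗1) Uᴴ ∈ M_s ⊗ 1
    set T : Submodule ℂ (Matrix s s ℂ) :=
      { carrier := {A | ∃ B, U * (A ⊗ₖ (1 : Matrix e e ℂ)) * Uᴴ = B ⊗ₖ (1 : Matrix e e ℂ)}
        add_mem' := by
          rintro A A' ⟨B, hB⟩ ⟨B', hB'⟩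
          exact ⟨B + B', by
            rw [Matrix.add_kronecker, mul_add, add_mul, hB, hB', Matrix.add_kronecker]⟩
        zero_mem' := ⟨0, by rw [Matrix.zero_kronecker, mul_zero, zero_mul]⟩
        smul_mem' := by
          rintro c A ⟨B, hB⟩
          exact ⟨c • B, by
            rw [Matrix.smul_kronecker, Matrix.mul_smul, Matrix.smul_mul, hB,
              Matrix.smul_kronecker]⟩ } with hT
    have hmemT : ∀ A : Matrix s s ℂ, ∃ B,
        U * (A ⊗ₖ (1 : Matrix e e ℂ)) * Uᴴ = B ⊗ₖ (1 : Matrix e e ℂ) := by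
      intro A
      have hsub : (Matrix.unitaryGroup s ℂ : Set (Matrix s s ℂ)) ⊆ (T : Set (Matrix s s ℂ)) := by
        intro W hW
        have hmem : U * (W ⊗ₖ (1 : Matrix e e ℂ)) * Uᴴ ∈
            {A : Matrix (s × e) (s × e) ℂ |
              ∃ W' ∈ Matrix.unitaryGroup s ℂ, A = W' ⊗ₖ (1 : Matrix e e ℂ)} := by
          rw [← himg]
          exact ⟨W ⊗ₖ (1 : Matrix e e ℂ), ⟨W, hW, rfl⟩, rfl⟩
        obtain ⟨W', _, hW'⟩ := hmem
        exact ⟨W', hW'⟩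
      exact (Submodule.span_le.mpr hsub) (mem_span_unitary A)
    set g : Matrix s s ℂ → Matrix s s ℂ := fun A => Classical.choose (hmemT A) with hg
    have spec : ∀ A : Matrix s s ℂ,
        U * (A ⊗ₖ (1 : Matrix e e ℂ)) * Uᴴ = g A ⊗ₖ (1 : Matrix e e ℂ) :=
      fun A => Classical.choose_spec (hmemT A)
    have huniq : ∀ (A B : Matrix s s ℂ),
        U * (A ⊗ₖ (1 : Matrix e e ℂ)) * Uᴴ = B ⊗ₖ (1 : Matrix e e ℂ) → g A = B := by
      intro A B hB
      exact kronOneInj ((spec A).symm.trans hB)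
    have hadd : ∀ A B, g (A + B) = g A + g B := by
      intro A B
      refine huniq _ _ ?_
      rw [Matrix.add_kronecker, mul_add, add_mul, spec A, spec B, Matrix.add_kronecker]
    have hsmul : ∀ (c : ℂ) A, g (c • A) = c • g A := by
      intro c A
      refine huniq _ _ ?_
      rw [Matrix.smul_kronecker, Matrix.mul_smul, Matrix.smul_mul, spec A,
        Matrix.smul_kronecker]
    have hmul : ∀ A B, g (A * B) = g A * g B := by
      intro A B
      refine huniq _ _ ?_
      have hAB : (A * B) ⊗ₖ (1 : Matrix e e ℂ) =
          (A ⊗ₖ (1 : Matrix e e ℂ)) * (B ⊗ₖ (1 : Matrix e e ℂ)) := by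
        rw [← Matrix.mul_kronecker_mul, mul_one]
      rw [hAB, show U * ((A ⊗ₖ (1 : Matrix e e ℂ)) * (B ⊗ₖ (1 : Matrix e e ℂ))) * Uᴴ
          = (U * (A ⊗ₖ (1 : Matrix e e ℂ)) * Uᴴ) * (U * (B ⊗ₖ (1 : Matrix e e ℂ)) * Uᴴ) from by
        rw [show (U * (A ⊗ₖ (1 : Matrix e e ℂ)) * Uᴴ) * (U * (B ⊗ₖ (1 : Matrix e e ℂ)) * Uᴴ)
            = U * (A ⊗ₖ (1 : Matrix e e ℂ)) * (Uᴴ * U) * ((B ⊗ₖ (1 : Matrix e e ℂ)) * Uᴴ) from by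
          simp only [mul_assoc], hU1, mul_one]
        simp only [mul_assoc]]
      rw [spec A, spec B, ← Matrix.mul_kronecker_mul, mul_one]
    have hone : g 1 = 1 := by
      refine huniq _ _ ?_
      rw [Matrix.one_kronecker_one, mul_one, hU2]
    have hstar : ∀ A, g Aᴴ = (g A)ᴴ := by
      intro A
      refine huniq _ _ ?_
      have : U * (Aᴴ ⊗ₖ (1 : Matrix e e ℂ)) * Uᴴ = (U * (A ⊗ₖ (1 : Matrix e e ℂ)) * Uᴴ)ᴴ := by
        rw [Matrix.conjTranspose_mul, Matrix.conjTranspose_mul,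
          Matrix.conjTranspose_conjTranspose, kronCT, Matrix.conjTranspose_one, mul_assoc]
      rw [this, spec A, kronCT, Matrix.conjTranspose_one]
    obtain ⟨Ψ, hΨmem, hΨ⟩ := inner_of_hom g hadd hsmul hmul hone hstar
    have hΨ1 : Ψᴴ * Ψ = 1 := by
      rw [← Matrix.star_eq_conjTranspose]
      exact (Unitary.mem_iff.mp hΨmem).1
    have hΨ2 : Ψ * Ψᴴ = 1 := mul_eq_one_comm.mpr hΨ1
    set V : Matrix (s × e) (s × e) ℂ := (Ψᴴ ⊗ₖ (1 : Matrix e e ℂ)) * U with hV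
    have hUA : ∀ A : Matrix s s ℂ,
        U * (A ⊗ₖ (1 : Matrix e e ℂ)) = (g A ⊗ₖ (1 : Matrix e e ℂ)) * U := by
      intro A
      calc U * (A ⊗ₖ (1 : Matrix e e ℂ))
          = U * (A ⊗ₖ (1 : Matrix e e ℂ)) * (Uᴴ * U) := by rw [hU1, mul_one]
      _ = (U * (A ⊗ₖ (1 : Matrix e e ℂ)) * Uᴴ) * U := by simp only [mul_assoc]
      _ = (g A ⊗ₖ (1 : Matrix e e ℂ)) * U := by rw [spec A]
    have hVcomm : ∀ A : Matrix s s ℂ,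
        V * (A ⊗ₖ (1 : Matrix e e ℂ)) = (A ⊗ₖ (1 : Matrix e e ℂ)) * V := by
      intro A
      calc V * (A ⊗ₖ (1 : Matrix e e ℂ))
          = (Ψᴴ ⊗ₖ (1 : Matrix e e ℂ)) * (U * (A ⊗ₖ (1 : Matrix e e ℂ))) := by
            rw [hV, mul_assoc]
      _ = (Ψᴴ ⊗ₖ (1 : Matrix e e ℂ)) * ((g A ⊗ₖ (1 : Matrix e e ℂ)) * U) := by rw [hUA]
      _ = ((Ψᴴ * g A) ⊗ₖ ((1 : Matrix e e ℂ) * 1)) * U := by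
            rw [Matrix.mul_kronecker_mul, mul_assoc]
      _ = ((A * Ψᴴ) ⊗ₖ ((1 : Matrix e e ℂ) * 1)) * U := by
            rw [hΨ A, show Ψᴴ * (Ψ * A * Ψᴴ) = (Ψᴴ * Ψ) * (A * Ψᴴ) from by
              simp only [mul_assoc], hΨ1, one_mul]
      _ = (A ⊗ₖ (1 : Matrix e e ℂ)) * ((Ψᴴ ⊗ₖ (1 : Matrix e e ℂ)) * U) := by
            rw [Matrix.mul_kronecker_mul, mul_assoc]
      _ = (A ⊗ₖ (1 : Matrix e e ℂ)) * V := by rw [hV]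
    obtain ⟨Φ, hΦ⟩ := commutant_lemma V hVcomm
    have hVunit : Vᴴ * V = 1 := by
      rw [hV, Matrix.conjTranspose_mul, kronCT, Matrix.conjTranspose_one,
        Matrix.conjTranspose_conjTranspose]
      calc Uᴴ * (Ψ ⊗ₖ (1 : Matrix e e ℂ)) * ((Ψᴴ ⊗ₖ (1 : Matrix e e ℂ)) * U)
          = Uᴴ * ((Ψ ⊗ₖ (1 : Matrix e e ℂ)) * (Ψᴴ ⊗ₖ (1 : Matrix e e ℂ))) * U := by
            simp only [mul_assoc]
      _ = Uᴴ * U := by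
            rw [← Matrix.mul_kronecker_mul, hΨ2, mul_one, Matrix.one_kronecker_one, mul_one]
      _ = 1 := hU1
    have hΦunit : Φᴴ * Φ = 1 := by
      have h1 : (1 : Matrix s s ℂ) ⊗ₖ (Φᴴ * Φ)
          = ((1 : Matrix s s ℂ) ⊗ₖ Φ)ᴴ * ((1 : Matrix s s ℂ) ⊗ₖ Φ) := by
        rw [kronCT, Matrix.conjTranspose_one, ← Matrix.mul_kronecker_mul, one_mul]
      apply oneKronInj (s := s)
      rw [h1, ← hΦ, hVunit, Matrix.one_kronecker_one]
    have hΦmem : Φ ∈ Matrix.unitaryGroup e ℂ := by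
      rw [Matrix.mem_unitaryGroup_iff', Matrix.star_eq_conjTranspose]
      exact hΦunit
    refine ⟨Ψ, hΨmem, Φ, hΦmem, ?_⟩
    calc U = ((Ψ * Ψᴴ) ⊗ₖ ((1 : Matrix e e ℂ) * 1)) * U := by
          rw [hΨ2, mul_one, Matrix.one_kronecker_one, one_mul]
    _ = (Ψ ⊗ₖ (1 : Matrix e e ℂ)) * V := by
          rw [Matrix.mul_kronecker_mul, mul_assoc, hV]
    _ = (Ψ ⊗ₖ (1 : Matrix e e ℂ)) * ((1 : Matrix s s ℂ) ⊗ₖ Φ) := by rw [hΦ]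
    _ = Ψ ⊗ₖ Φ := by rw [← Matrix.mul_kronecker_mul, mul_one, one_mul]
  · rintro ⟨Ψ, hΨmem, Φ, hΦmem, rfl⟩
    have hΨ1 : Ψᴴ * Ψ = 1 := by
      rw [← Matrix.star_eq_conjTranspose]; exact (Unitary.mem_iff.mp hΨmem).1
    have hΨ2 : Ψ * Ψᴴ = 1 := by
      rw [← Matrix.star_eq_conjTranspose]; exact (Unitary.mem_iff.mp hΨmem).2
    have hΦ1 : Φᴴ * Φ = 1 := by
      rw [← Matrix.star_eq_conjTranspose]; exact (Unitary.mem_iff.mp hΦmem).1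
    have hΦ2 : Φ * Φᴴ = 1 := by
      rw [← Matrix.star_eq_conjTranspose]; exact (Unitary.mem_iff.mp hΦmem).2
    constructor
    · rw [Matrix.mem_unitaryGroup_iff, Matrix.star_eq_conjTranspose, kronCT,
        ← Matrix.mul_kronecker_mul, hΨ2, hΦ2, Matrix.one_kronecker_one]
    · ext x
      simp only [Set.mem_image, Set.mem_setOf_eq]
      constructor
      · rintro ⟨A, ⟨W, hW, rfl⟩, rfl⟩
        refine ⟨Ψ * W * Ψᴴ, mul_mem (mul_mem hΨmem hW) (starMem hΨmem), ?_⟩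
        rw [kronCT, ← Matrix.mul_kronecker_mul, ← Matrix.mul_kronecker_mul, mul_one, hΦ2]
      · rintro ⟨W', hW', rfl⟩
        refine ⟨(Ψᴴ * W' * Ψ) ⊗ₖ (1 : Matrix e e ℂ),
          ⟨Ψᴴ * W' * Ψ, mul_mem (mul_mem (starMem hΨmem) hW') hΨmem, rfl⟩, ?_⟩
        show (Ψ ⊗ₖ Φ) * ((Ψᴴ * W' * Ψ) ⊗ₖ (1 : Matrix e e ℂ)) * (Ψ ⊗ₖ Φ)ᴴ = _
        rw [kronCT, ← Matrix.mul_kronecker_mul, ← Matrix.mul_kronecker_mul, mul_one, hΦ2]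
        rw [show Ψ * (Ψᴴ * W' * Ψ) * Ψᴴ = W' from by
          calc Ψ * (Ψᴴ * W' * Ψ) * Ψᴴ = (Ψ * Ψᴴ) * W' * (Ψ * Ψᴴ) := by simp only [mul_assoc]
          _ = W' := by rw [hΨ2, one_mul, mul_one]]
end

section
/- If Δ is a bi-invariant metric on the unitary group of H_s ⊗ H_e (i.e., Δ(W₁UW₂, W₁VW₂) = Δ(U,V) for all unitaries), and the quotient metric is Δ̃([U],[V]) = min_{Φ unitary on H_e} Δ(U, (1_s⊗Φ)V), then for any unitaries U₁, U₂ on H_s⊗H_e and any V₁, V₂ ∈ U(H_s)⊗U(H_e) one has Δ̃([U₂U₁],[V₂V₁]) ≤ Δ̃([U₁],[V₁]) + Δ̃([U₂],[V₂]). -/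
open Matrix Kronecker
open scoped ComplexOrder

lemma star_kron {s e : Type*} [Fintype s] [Fintype e]
    (A : Matrix s s ℂ) (B : Matrix e e ℂ) :
    star (A ⊗ₖ B) = (star A) ⊗ₖ (star B) := by
  ext ⟨i, μ⟩ ⟨j, ν⟩
  simp [Matrix.star_apply, Matrix.kronecker_apply, Matrix.conjTranspose_apply]

lemma kron_mem_unitary {s e : Type*} [Fintype s] [Fintype e] [DecidableEq s] [DecidableEq e]
    {A : Matrix s s ℂ} {B : Matrix e e ℂ}
    (hA : A ∈ Matrix.unitaryGroup s ℂ) (hB : B ∈ Matrix.unitaryGroup e ℂ) :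
    A ⊗ₖ B ∈ Matrix.unitaryGroup (s × e) ℂ := by
  rw [Matrix.mem_unitaryGroup_iff] at hA hB ⊢
  rw [star_kron, ← Matrix.mul_kronecker_mul, hA, hB, Matrix.one_kronecker_one]

/-- chaining for the quotient metric of a bi-invariant metric `Δ`:
`Δ̃([U₂U₁],[V₂V₁]) ≤ Δ̃([U₁],[V₁]) + Δ̃([U₂],[V₂])` whenever `V₁, V₂` are tensor-product
unitaries. -/
theorem stmt8 {s e : Type*} [Fintype s] [Fintype e] [DecidableEq s] [DecidableEq e]
    (Δ : Matrix (s × e) (s × e) ℂ → Matrix (s × e) (s × e) ℂ → ℝ)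
    (hnonneg : ∀ U V, U ∈ Matrix.unitaryGroup (s × e) ℂ → V ∈ Matrix.unitaryGroup (s × e) ℂ →
      0 ≤ Δ U V)
    (hrefl : ∀ U, U ∈ Matrix.unitaryGroup (s × e) ℂ → Δ U U = 0)
    (hsymm : ∀ U V, U ∈ Matrix.unitaryGroup (s × e) ℂ → V ∈ Matrix.unitaryGroup (s × e) ℂ →
      Δ U V = Δ V U)
    (htri : ∀ U V W, U ∈ Matrix.unitaryGroup (s × e) ℂ → V ∈ Matrix.unitaryGroup (s × e) ℂ →
      W ∈ Matrix.unitaryGroup (s × e) ℂ → Δ U W ≤ Δ U V + Δ V W)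
    (hbi : ∀ U V W₁ W₂, U ∈ Matrix.unitaryGroup (s × e) ℂ →
      V ∈ Matrix.unitaryGroup (s × e) ℂ → W₁ ∈ Matrix.unitaryGroup (s × e) ℂ →
      W₂ ∈ Matrix.unitaryGroup (s × e) ℂ → Δ (W₁ * U * W₂) (W₁ * V * W₂) = Δ U V)
    (U₁ U₂ : Matrix (s × e) (s × e) ℂ)
    (hU₁ : U₁ ∈ Matrix.unitaryGroup (s × e) ℂ) (hU₂ : U₂ ∈ Matrix.unitaryGroup (s × e) ℂ)
    (Ψ₁ Ψ₂ : Matrix s s ℂ) (Φ₁ Φ₂ : Matrix e e ℂ)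
    (hΨ₁ : Ψ₁ ∈ Matrix.unitaryGroup s ℂ) (hΨ₂ : Ψ₂ ∈ Matrix.unitaryGroup s ℂ)
    (hΦ₁ : Φ₁ ∈ Matrix.unitaryGroup e ℂ) (hΦ₂ : Φ₂ ∈ Matrix.unitaryGroup e ℂ) :
    sInf {x : ℝ | ∃ Φ ∈ Matrix.unitaryGroup e ℂ,
        x = Δ (U₂ * U₁) (((1 : Matrix s s ℂ) ⊗ₖ Φ) * ((Ψ₂ ⊗ₖ Φ₂) * (Ψ₁ ⊗ₖ Φ₁)))}
      ≤ sInf {x : ℝ | ∃ Φ ∈ Matrix.unitaryGroup e ℂ,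
          x = Δ U₁ (((1 : Matrix s s ℂ) ⊗ₖ Φ) * (Ψ₁ ⊗ₖ Φ₁))}
        + sInf {x : ℝ | ∃ Φ ∈ Matrix.unitaryGroup e ℂ,
            x = Δ U₂ (((1 : Matrix s s ℂ) ⊗ₖ Φ) * (Ψ₂ ⊗ₖ Φ₂))} := by
  classical
  set A := {x : ℝ | ∃ Φ ∈ Matrix.unitaryGroup e ℂ,
      x = Δ U₁ (((1 : Matrix s s ℂ) ⊗ₖ Φ) * (Ψ₁ ⊗ₖ Φ₁))} with hAdef
  set B := {x : ℝ | ∃ Φ ∈ Matrix.unitaryGroup e ℂ,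
      x = Δ U₂ (((1 : Matrix s s ℂ) ⊗ₖ Φ) * (Ψ₂ ⊗ₖ Φ₂))} with hBdef
  set L := {x : ℝ | ∃ Φ ∈ Matrix.unitaryGroup e ℂ,
      x = Δ (U₂ * U₁) (((1 : Matrix s s ℂ) ⊗ₖ Φ) * ((Ψ₂ ⊗ₖ Φ₂) * (Ψ₁ ⊗ₖ Φ₁)))} with hLdef
  have hone : (1 : Matrix e e ℂ) ∈ Matrix.unitaryGroup e ℂ := one_mem _
  have hAne : A.Nonempty := ⟨_, 1, hone, rfl⟩
  have hBne : B.Nonempty := ⟨_, 1, hone, rfl⟩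
  have hLbdd : BddBelow L := by
    refine ⟨0, fun x hx => ?_⟩
    obtain ⟨Φ, hΦ, rfl⟩ := hx
    exact hnonneg _ _ (mul_mem hU₂ hU₁)
      (mul_mem (kron_mem_unitary (one_mem _) hΦ)
        (mul_mem (kron_mem_unitary hΨ₂ hΦ₂) (kron_mem_unitary hΨ₁ hΦ₁)))
  -- the key pointwise bound
  have key : ∀ a ∈ A, ∀ b ∈ B, sInf L ≤ a + b := by
    rintro a ⟨Φ, hΦ, rfl⟩ b ⟨Φ', hΦ', rfl⟩
    set Φ'' : Matrix e e ℂ := Φ' * Φ₂ * Φ * star Φ₂ with hΦ''def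
    have hΦ''mem : Φ'' ∈ Matrix.unitaryGroup e ℂ :=
      mul_mem (mul_mem (mul_mem hΦ' hΦ₂) hΦ) (Unitary.star_mem hΦ₂)
    have h2 : star Φ₂ * Φ₂ = 1 := Matrix.mem_unitaryGroup_iff'.mp hΦ₂
    have hΦeq : Φ'' * Φ₂ = Φ' * Φ₂ * Φ := by
      rw [hΦ''def, mul_assoc, h2, mul_one]
    have hmat : ((1 : Matrix s s ℂ) ⊗ₖ Φ'') * (Ψ₂ ⊗ₖ Φ₂)
        = (((1 : Matrix s s ℂ) ⊗ₖ Φ') * (Ψ₂ ⊗ₖ Φ₂)) * ((1 : Matrix s s ℂ) ⊗ₖ Φ) := by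
      rw [← Matrix.mul_kronecker_mul, ← Matrix.mul_kronecker_mul,
        ← Matrix.mul_kronecker_mul, hΦeq]
      simp
    -- membership data
    have hX₁ : ((1 : Matrix s s ℂ) ⊗ₖ Φ) * (Ψ₁ ⊗ₖ Φ₁) ∈ Matrix.unitaryGroup (s × e) ℂ :=
      mul_mem (kron_mem_unitary (one_mem _) hΦ) (kron_mem_unitary hΨ₁ hΦ₁)
    have hX₂ : ((1 : Matrix s s ℂ) ⊗ₖ Φ') * (Ψ₂ ⊗ₖ Φ₂) ∈ Matrix.unitaryGroup (s × e) ℂ :=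
      mul_mem (kron_mem_unitary (one_mem _) hΦ') (kron_mem_unitary hΨ₂ hΦ₂)
    have hM : ((1 : Matrix s s ℂ) ⊗ₖ Φ'') * ((Ψ₂ ⊗ₖ Φ₂) * (Ψ₁ ⊗ₖ Φ₁))
        ∈ Matrix.unitaryGroup (s × e) ℂ :=
      mul_mem (kron_mem_unitary (one_mem _) hΦ''mem)
        (mul_mem (kron_mem_unitary hΨ₂ hΦ₂) (kron_mem_unitary hΨ₁ hΦ₁))
    have hV : U₂ * (((1 : Matrix s s ℂ) ⊗ₖ Φ) * (Ψ₁ ⊗ₖ Φ₁)) ∈ Matrix.unitaryGroup (s × e) ℂ :=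
      mul_mem hU₂ hX₁
    -- sInf L ≤ the element given by Φ''
    have hmem : Δ (U₂ * U₁) (((1 : Matrix s s ℂ) ⊗ₖ Φ'') * ((Ψ₂ ⊗ₖ Φ₂) * (Ψ₁ ⊗ₖ Φ₁))) ∈ L :=
      ⟨Φ'', hΦ''mem, rfl⟩
    refine le_trans (csInf_le hLbdd hmem) ?_
    -- triangle inequality through the midpoint
    have htri' := htri (U₂ * U₁) (U₂ * (((1 : Matrix s s ℂ) ⊗ₖ Φ) * (Ψ₁ ⊗ₖ Φ₁)))
      (((1 : Matrix s s ℂ) ⊗ₖ Φ'') * ((Ψ₂ ⊗ₖ Φ₂) * (Ψ₁ ⊗ₖ Φ₁)))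
      (mul_mem hU₂ hU₁) hV hM
    have e1 : Δ (U₂ * U₁) (U₂ * (((1 : Matrix s s ℂ) ⊗ₖ Φ) * (Ψ₁ ⊗ₖ Φ₁)))
        = Δ U₁ (((1 : Matrix s s ℂ) ⊗ₖ Φ) * (Ψ₁ ⊗ₖ Φ₁)) := by
      have := hbi U₁ (((1 : Matrix s s ℂ) ⊗ₖ Φ) * (Ψ₁ ⊗ₖ Φ₁)) U₂ 1 hU₁ hX₁ hU₂ (one_mem _)
      simpa using this
    have e2 : Δ (U₂ * (((1 : Matrix s s ℂ) ⊗ₖ Φ) * (Ψ₁ ⊗ₖ Φ₁)))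
        (((1 : Matrix s s ℂ) ⊗ₖ Φ'') * ((Ψ₂ ⊗ₖ Φ₂) * (Ψ₁ ⊗ₖ Φ₁)))
        = Δ U₂ (((1 : Matrix s s ℂ) ⊗ₖ Φ') * (Ψ₂ ⊗ₖ Φ₂)) := by
      have hre : ((1 : Matrix s s ℂ) ⊗ₖ Φ'') * ((Ψ₂ ⊗ₖ Φ₂) * (Ψ₁ ⊗ₖ Φ₁))
          = 1 * (((1 : Matrix s s ℂ) ⊗ₖ Φ') * (Ψ₂ ⊗ₖ Φ₂))
            * (((1 : Matrix s s ℂ) ⊗ₖ Φ) * (Ψ₁ ⊗ₖ Φ₁)) := by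
        rw [one_mul, ← mul_assoc, hmat]
        noncomm_ring
      have hle : U₂ * (((1 : Matrix s s ℂ) ⊗ₖ Φ) * (Ψ₁ ⊗ₖ Φ₁))
          = 1 * U₂ * (((1 : Matrix s s ℂ) ⊗ₖ Φ) * (Ψ₁ ⊗ₖ Φ₁)) := by rw [one_mul]
      rw [hre, hle]
      exact hbi U₂ (((1 : Matrix s s ℂ) ⊗ₖ Φ') * (Ψ₂ ⊗ₖ Φ₂)) 1
        (((1 : Matrix s s ℂ) ⊗ₖ Φ) * (Ψ₁ ⊗ₖ Φ₁)) hU₂ hX₂ (one_mem _) hX₁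
    rw [e1, e2] at htri'
    exact htri'
  have h1 : sInf L - sInf B ≤ sInf A := by
    refine le_csInf hAne fun a ha => ?_
    have h2 : sInf L - a ≤ sInf B := by
      refine le_csInf hBne fun b hb => ?_
      have := key a ha b hb
      linarith
    linarith
  linarith
end
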